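/- For real s > 2 and prime p, (1 − p^{−1})^{−2} ∫_{(t₂₂,t₃₃) ∈ Z_p², t₂₂ ∣ t₃₃} |t₂₂|^{s−2}|t₃₃|^{s−2} dμ = ζ_p(s−1) ζ_p(2s−2). -/

import Mathlib

open MeasureTheory TopologicalSpace
open scoped ENNReal NNReal

noncomputable instance (p : ℕ) [Fact p.Prime] : MeasurableSpace ℤ_[p] := borel _
instance (p : ℕ) [Fact p.Prime] : BorelSpace ℤ_[p] := ⟨rfl⟩

/-- `ℤ_p` as a positive compact subset of itself. -/
noncomputable def univPC (p : ℕ) [Fact p.Prime] : PositiveCompacts ℤ_[p] :=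
  ⟨⟨Set.univ, isCompact_univ⟩, by simp⟩

/-- The Haar measure on `ℤ_p`, normalized so that `μ (ℤ_p) = 1`. -/
noncomputable def μ (p : ℕ) [Fact p.Prime] : Measure ℤ_[p] :=
  Measure.addHaarMeasure (univPC p)

noncomputable def zetap (p : ℕ) (s : ℝ) : ℝ := (1 - (p : ℝ) ^ (-s))⁻¹

section Aux
variable (p : ℕ) [Fact p.Prime]

instance : (μ p).IsAddHaarMeasure := Measure.isAddHaarMeasure_addHaarMeasure _

example : SecondCountableTopology ℤ_[p] := inferInstance

lemma mu_univ : μ p Set.univ = 1 := Measure.addHaarMeasure_self (K₀ := univPC p)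

instance : IsProbabilityMeasure (μ p) := ⟨mu_univ p⟩

/-- closed ball of radius p^{-n} -/
def Bn (n : ℕ) : Set ℤ_[p] := {x | ‖x‖ ≤ (p:ℝ) ^ (-(n:ℤ))}

lemma Bn_meas (n : ℕ) : MeasurableSet (Bn p n) :=
  measurableSet_le continuous_norm.measurable measurable_const

lemma coset_eq (j : ℤ_[p]) (n : ℕ) :
    (fun x => x - j) ⁻¹' (Bn p n) = (fun x => -j + x) ⁻¹' (Bn p n) := by
  ext x; simp [Bn, sub_eq_neg_add]

lemma mu_Bn (n : ℕ) : μ p (Bn p n) = ((p:ℝ≥0∞)⁻¹) ^ n := by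
  classical
  set C : ℕ → Set ℤ_[p] := fun j => (fun x => x - (j:ℤ_[p])) ⁻¹' (Bn p n) with hC
  have hmeasC : ∀ j, MeasurableSet (C j) := fun j =>
    (Bn_meas p n).preimage (measurable_id.sub measurable_const)
  have hmuC : ∀ j, μ p (C j) = μ p (Bn p n) := by
    intro j
    rw [hC]
    simp only
    rw [coset_eq]
    exact measure_preimage_add (μ p) _ _
  have hcover : Set.univ = ⋃ j ∈ Finset.range (p^n), C j := by
    ext x
    simp only [Set.mem_univ, Set.mem_iUnion, true_iff, Finset.mem_range]
    refine ⟨x.appr n, x.appr_lt n, ?_⟩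
    show ‖x - (x.appr n : ℤ_[p])‖ ≤ _
    rw [PadicInt.norm_le_pow_iff_mem_span_pow]
    exact x.appr_spec n
  have hdisj : (Finset.range (p^n) : Set ℕ).PairwiseDisjoint C := by
    intro j hj k hk hjk
    simp only [Finset.coe_range, Set.mem_Iio] at hj hk
    refine Set.disjoint_left.mpr fun x hx hx' => ?_
    have h1 : ‖x - (j:ℤ_[p])‖ ≤ (p:ℝ) ^ (-(n:ℤ)) := hx
    have h2 : ‖x - (k:ℤ_[p])‖ ≤ (p:ℝ) ^ (-(n:ℤ)) := hx'
    have h3 : ‖((j:ℤ) - (k:ℤ) : ℤ) • (1:ℤ_[p])‖ ≤ (p:ℝ) ^ (-(n:ℤ)) := by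
      have : (((j:ℤ) - (k:ℤ) : ℤ) : ℤ_[p]) = (x - (k:ℤ_[p])) - (x - (j:ℤ_[p])) := by
        push_cast; ring
      rw [zsmul_eq_mul, mul_one, this]
      have := PadicInt.nonarchimedean (x - (k:ℤ_[p])) (-(x - (j:ℤ_[p])))
      rw [← sub_eq_add_neg] at this
      simp only [norm_neg] at this
      exact le_trans this (max_le h2 h1)
    rw [zsmul_eq_mul, mul_one, PadicInt.norm_int_le_pow_iff_dvd] at h3
    have hz : (j:ℤ) - (k:ℤ) = 0 := by
      refine Int.eq_zero_of_dvd_of_natAbs_lt_natAbs h3 ?_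
      have h4 : ((j:ℤ) - k).natAbs < p ^ n := by omega
      have h5 : ((p:ℤ) ^ n).natAbs = p ^ n := by
        simp [Int.natAbs_pow]
      omega
    exact hjk (by omega)
  -- now sum the measures
  have hsum : μ p Set.univ = ∑ j ∈ Finset.range (p^n), μ p (C j) := by
    rw [hcover]
    exact measure_biUnion_finset hdisj (fun j _ => hmeasC j)
  rw [mu_univ] at hsum
  simp only [hmuC, Finset.sum_const, Finset.card_range, nsmul_eq_mul] at hsum
  have hp0 : (p:ℝ≥0∞) ≠ 0 := by
    exact_mod_cast (Fact.out (p := p.Prime)).pos.ne'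
  have hpt : (p:ℝ≥0∞) ≠ ⊤ := by simp
  have hpn0 : ((p:ℝ≥0∞))^n ≠ 0 := pow_ne_zero _ hp0
  have hpnt : ((p:ℝ≥0∞))^n ≠ ⊤ := ENNReal.pow_ne_top hpt
  have hcast : ((p^n : ℕ) : ℝ≥0∞) = (p:ℝ≥0∞)^n := by push_cast; ring
  rw [hcast] at hsum
  rw [← ENNReal.inv_pow]
  exact ENNReal.eq_inv_of_mul_eq_one_left (by rw [mul_comm]; exact hsum.symm)

/-- shell of norm exactly p^{-m} -/
def Sn (m : ℕ) : Set ℤ_[p] := {x | ‖x‖ = (p:ℝ) ^ (-(m:ℤ))}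

lemma Sn_meas (m : ℕ) : MeasurableSet (Sn p m) :=
  continuous_norm.measurable (measurableSet_singleton _)

lemma Sn_eq_diff (m : ℕ) : Sn p m = Bn p m \ Bn p (m+1) := by
  ext x
  have hlt : ‖x‖ ≤ (p:ℝ) ^ (-((m:ℕ)+1:ℕ):ℤ) ↔ ‖x‖ < (p:ℝ) ^ (-(m:ℤ)) := by
    rw [PadicInt.norm_le_pow_iff_norm_lt_pow_add_one]
    constructor <;> intro h <;> convert h using 2 <;> push_cast <;> ring
  simp only [Sn, Bn, Set.mem_setOf_eq, Set.mem_diff, hlt]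
  constructor
  · intro h; exact ⟨le_of_eq h, by rw [h]; exact lt_irrefl _⟩
  · intro ⟨h1, h2⟩; exact le_antisymm h1 (not_lt.mp h2)

lemma Bn_subset (m : ℕ) : Bn p (m+1) ⊆ Bn p m := by
  intro x hx
  have hx' : ‖x‖ ≤ (p:ℝ)^(-((m+1:ℕ)):ℤ) := hx
  show ‖x‖ ≤ (p:ℝ)^(-(m:ℤ))
  refine le_trans hx' ?_
  have hp1 : (1:ℝ) ≤ (p:ℝ) := by exact_mod_cast (Fact.out (p := p.Prime)).one_lt.le
  exact zpow_le_zpow_right₀ hp1 (by omega)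

lemma mu_Sn (m : ℕ) :
    μ p (Sn p m) = ((p:ℝ≥0∞)⁻¹)^m - ((p:ℝ≥0∞)⁻¹)^(m+1) := by
  rw [Sn_eq_diff, measure_diff (Bn_subset p m) (Bn_meas p (m+1)).nullMeasurableSet
    (measure_ne_top _ _), mu_Bn, mu_Bn]

lemma mu_Sn_toReal (m : ℕ) :
    (μ p (Sn p m)).toReal = ((p:ℝ)⁻¹)^m * (1 - (p:ℝ)⁻¹) := by
  have hp1 : (1:ℝ) < p := by exact_mod_cast (Fact.out (p := p.Prime)).one_lt
  have hle : ((p:ℝ≥0∞)⁻¹)^(m+1) ≤ ((p:ℝ≥0∞)⁻¹)^m :=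
    pow_le_pow_of_le_one zero_le (ENNReal.inv_le_one.mpr (by
      exact_mod_cast Nat.one_le_iff_ne_zero.mpr (Fact.out (p := p.Prime)).pos.ne')) (by omega)
  have hnt : ((p:ℝ≥0∞)⁻¹)^m ≠ ⊤ :=
    ENNReal.pow_ne_top (ENNReal.inv_ne_top.mpr (by
      exact_mod_cast (Fact.out (p := p.Prime)).pos.ne'))
  rw [mu_Sn, ENNReal.toReal_sub_of_le hle hnt]
  have hcast : ∀ k : ℕ, (((p:ℝ≥0∞)⁻¹)^k).toReal = ((p:ℝ)⁻¹)^k := by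
    intro k
    rw [← ENNReal.inv_pow, ENNReal.toReal_inv]
    simp
  rw [hcast, hcast, pow_succ]
  ring

lemma hp1R : (1:ℝ) < (p:ℝ) := by exact_mod_cast (Fact.out (p := p.Prime)).one_lt

lemma Sn_ne_zero {m : ℕ} {x : ℤ_[p]} (hx : x ∈ Sn p m) : x ≠ 0 := by
  intro h
  rw [h] at hx
  have : (0:ℝ) = (p:ℝ) ^ (-(m:ℤ)) := by simpa [Sn] using hx
  exact absurd this.symm (ne_of_gt (zpow_pos (by linarith [hp1R p]) _))

lemma Sn_val {m : ℕ} {x : ℤ_[p]} (hx : x ∈ Sn p m) : x.valuation = m := by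
  have hx0 := Sn_ne_zero p hx
  have h := PadicInt.norm_eq_zpow_neg_valuation hx0
  have h2 : (p:ℝ) ^ (-(x.valuation:ℤ)) = (p:ℝ) ^ (-(m:ℤ)) := by
    rw [← h]; exact hx
  have := zpow_right_injective₀ (by linarith [hp1R p] : (0:ℝ) < p) (ne_of_gt (hp1R p)) h2
  omega

lemma mem_Sn_self {x : ℤ_[p]} (hx : x ≠ 0) : x ∈ Sn p x.valuation := by
  show ‖x‖ = _
  rw [PadicInt.norm_eq_zpow_neg_valuation hx]

lemma Sn_dvd {m n : ℕ} {x y : ℤ_[p]} (hx : x ∈ Sn p m) (hy : y ∈ Sn p n) (hmn : m ≤ n) :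
    x ∣ y := by
  have hx0 := Sn_ne_zero p hx
  have hy0 := Sn_ne_zero p hy
  have hxs := PadicInt.unitCoeff_spec hx0
  have hys := PadicInt.unitCoeff_spec hy0
  rw [Sn_val p hx] at hxs
  rw [Sn_val p hy] at hys
  have hu : (↑(PadicInt.unitCoeff hx0) : ℤ_[p]) * ↑(PadicInt.unitCoeff hx0)⁻¹ = 1 := by
    exact_mod_cast (PadicInt.unitCoeff hx0).mul_inv
  refine ⟨↑(PadicInt.unitCoeff hx0)⁻¹ * ↑(PadicInt.unitCoeff hy0) * (p:ℤ_[p])^(n-m), ?_⟩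
  have hn : m + (n - m) = n := by omega
  calc y = ↑(PadicInt.unitCoeff hy0) * (p:ℤ_[p])^n := hys
    _ = (↑(PadicInt.unitCoeff hx0) * (p:ℤ_[p])^m) *
        (↑(PadicInt.unitCoeff hx0)⁻¹ * ↑(PadicInt.unitCoeff hy0) * (p:ℤ_[p])^(n-m)) := by
      rw [show (p:ℤ_[p])^n = (p:ℤ_[p])^m * (p:ℤ_[p])^(n-m) from by rw [← pow_add, hn]]
      linear_combination (-(↑(PadicInt.unitCoeff hy0) * (p:ℤ_[p])^m * (p:ℤ_[p])^(n-m))) * hu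
    _ = x * _ := by rw [← hxs]

lemma dvd_val_le {x y : ℤ_[p]} (hx : x ≠ 0) (hy : y ≠ 0) (h : x ∣ y) :
    x.valuation ≤ y.valuation := by
  obtain ⟨c, rfl⟩ := h
  have hc : c ≠ 0 := by rintro rfl; simp at hy
  have hnorm : ‖x * c‖ ≤ ‖x‖ := by
    rw [norm_mul]
    exact mul_le_of_le_one_right (norm_nonneg _) (PadicInt.norm_le_one c)
  rw [PadicInt.norm_eq_zpow_neg_valuation hx, PadicInt.norm_eq_zpow_neg_valuation hy] at hnorm
  have := (zpow_le_zpow_iff_right₀ (hp1R p)).mp hnorm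
  omega

lemma ppow_ne_top (k : ℕ) : ((p:ℝ≥0∞)⁻¹)^k ≠ ⊤ :=
  ENNReal.pow_ne_top (ENNReal.inv_ne_top.mpr (by
    exact_mod_cast (Fact.out (p := p.Prime)).pos.ne'))

lemma toReal_ppow (k : ℕ) : (((p:ℝ≥0∞)⁻¹)^k).toReal = ((p:ℝ)⁻¹)^k := by
  rw [← ENNReal.inv_pow, ENNReal.toReal_inv]
  simp

lemma mu_zero : μ p {0} = 0 := by
  have h1 : ∀ n, μ p {0} ≤ ((p:ℝ≥0∞)⁻¹)^n := by
    intro n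
    rw [← mu_Bn]
    apply measure_mono
    intro x hx
    simp only [Set.mem_singleton_iff] at hx
    subst hx
    show ‖(0:ℤ_[p])‖ ≤ (p:ℝ)^(-(n:ℤ))
    rw [norm_zero]
    positivity
  have h2 : ∀ n, (μ p {0}).toReal ≤ ((p:ℝ)⁻¹)^n := by
    intro n
    have := ENNReal.toReal_mono (ppow_ne_top p n) (h1 n)
    rwa [toReal_ppow] at this
  have he : (p:ℝ)⁻¹ < 1 := by
    rw [inv_lt_one_iff₀]; right; exact hp1R p
  have he0 : (0:ℝ) ≤ (p:ℝ)⁻¹ := by positivity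
  have hlim := tendsto_pow_atTop_nhds_zero_of_lt_one he0 he
  have h3 : (μ p {0}).toReal ≤ 0 := ge_of_tendsto hlim (Filter.Eventually.of_forall h2)
  have h4 : (μ p {0}).toReal = 0 := le_antisymm h3 ENNReal.toReal_nonneg
  rw [ENNReal.toReal_eq_zero_iff] at h4
  rcases h4 with h | h
  · exact h
  · exact absurd h (measure_ne_top _ _)

/-- the pieces of the decomposition -/
def T (mk : ℕ × ℕ) : Set (ℤ_[p] × ℤ_[p]) := Sn p mk.1 ×ˢ Sn p (mk.1 + mk.2)

lemma T_meas (mk : ℕ × ℕ) : MeasurableSet (T p mk) :=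
  (Sn_meas p _).prod (Sn_meas p _)

lemma Sn_unique {m m' : ℕ} {x : ℤ_[p]} (h : x ∈ Sn p m) (h' : x ∈ Sn p m') : m = m' := by
  have := Sn_val p h
  have := Sn_val p h'
  omega

lemma T_disj : Pairwise (Function.onFun Disjoint (T p)) := by
  intro mk mk' hne
  refine Set.disjoint_left.mpr fun q hq hq' => hne ?_
  obtain ⟨h1, h2⟩ := hq
  obtain ⟨h1', h2'⟩ := hq'
  have e1 := Sn_unique p h1 h1'
  have e2 := Sn_unique p h2 h2'
  ext
  · exact e1
  · omega

lemma T_union : (⋃ mk, T p mk) = {q : ℤ_[p] × ℤ_[p] | q.1 ∣ q.2 ∧ q.2 ≠ 0} := by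
  ext q
  simp only [Set.mem_iUnion, Set.mem_setOf_eq]
  constructor
  · rintro ⟨⟨m, k⟩, h1, h2⟩
    exact ⟨Sn_dvd p h1 h2 (by omega), Sn_ne_zero p h2⟩
  · rintro ⟨hdvd, hy0⟩
    have hx0 : q.1 ≠ 0 := fun h => hy0 (zero_dvd_iff.mp (by rwa [h] at hdvd))
    have hle := dvd_val_le p hx0 hy0 hdvd
    refine ⟨⟨q.1.valuation, q.2.valuation - q.1.valuation⟩,
      mem_Sn_self p hx0, ?_⟩
    have : q.1.valuation + (q.2.valuation - q.1.valuation)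
        = q.2.valuation := by omega
    rw [this]
    exact mem_Sn_self p hy0

lemma D_ae_eq :
    {q : ℤ_[p] × ℤ_[p] | q.1 ∣ q.2} =ᵐ[(μ p).prod (μ p)] ⋃ mk, T p mk := by
  rw [MeasureTheory.ae_eq_set]
  constructor
  · refine measure_mono_null (fun q hq => ?_) (?_ : (μ p).prod (μ p) (Set.univ ×ˢ {0}) = 0)
    · obtain ⟨hd, hnot⟩ := hq
      have h2 : q.2 = 0 := by
        by_contra h
        exact hnot (by rw [T_union]; exact ⟨hd, h⟩)
      exact ⟨Set.mem_univ _, h2⟩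
    · rw [Measure.prod_prod, mu_zero, mul_zero]
  · rw [T_union]
    have : ({q : ℤ_[p] × ℤ_[p] | q.1 ∣ q.2 ∧ q.2 ≠ 0} \ {q | q.1 ∣ q.2}) = ∅ := by
      ext q; simp only [Set.mem_diff, Set.mem_setOf_eq, Set.mem_empty_iff_false, iff_false]
      rintro ⟨⟨h, _⟩, h2⟩; exact h2 h
    rw [this, measure_empty]

lemma zpow_neg_nat (m : ℕ) : (p:ℝ)^(-(m:ℤ)) = ((p:ℝ)⁻¹)^m := by
  rw [zpow_neg, zpow_natCast, inv_pow]

lemma pow_rpow_comm {e : ℝ} (he : 0 ≤ e) (a : ℝ) (m : ℕ) : (e^m) ^ a = (e ^ a)^m := by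
  rw [← Real.rpow_natCast e m, ← Real.rpow_mul he, mul_comm, Real.rpow_mul he,
    Real.rpow_natCast]

lemma piece_integral (a : ℝ) (mk : ℕ × ℕ) :
    ∫ q in T p mk, ‖q.1‖^a * ‖q.2‖^a ∂((μ p).prod (μ p)) =
    ((((p:ℝ)⁻¹)^mk.1)^a * (((p:ℝ)⁻¹)^(mk.1+mk.2))^a) *
      (((p:ℝ)⁻¹)^mk.1 * (1 - (p:ℝ)⁻¹) * (((p:ℝ)⁻¹)^(mk.1+mk.2) * (1 - (p:ℝ)⁻¹))) := by
  rw [setIntegral_congr_fun (T_meas p mk)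
    (g := fun _ => ((((p:ℝ)⁻¹)^mk.1)^a * (((p:ℝ)⁻¹)^(mk.1+mk.2))^a)) ?_]
  · rw [setIntegral_const, T, measureReal_prod_prod, measureReal_def, measureReal_def,
      mu_Sn_toReal, mu_Sn_toReal, smul_eq_mul]
    ring
  · rintro q ⟨h1, h2⟩
    have e1 : ‖q.1‖ = (p:ℝ)^(-(mk.1:ℤ)) := h1
    have e2 : ‖q.2‖ = (p:ℝ)^(-((mk.1+mk.2 : ℕ):ℤ)) := h2
    show ‖q.1‖ ^ a * ‖q.2‖ ^ a = _
    rw [e1, e2, zpow_neg_nat, zpow_neg_nat]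

end Aux

theorem stmt_13 (p : ℕ) [Fact p.Prime] (s : ℝ) (hs : 2 < s) :
    ((1 - (p : ℝ)⁻¹)⁻¹) ^ 2 *
      ∫ t in {q : ℤ_[p] × ℤ_[p] | q.1 ∣ q.2},
        ‖t.1‖ ^ (s - 2) * ‖t.2‖ ^ (s - 2) ∂((μ p).prod (μ p)) =
    zetap p (s - 1) * zetap p (2 * s - 2) := by
  have hp1 : (1:ℝ) < p := hp1R p
  set a : ℝ := s - 2 with ha_def
  have ha : 0 < a := by simp [ha_def]; linarith
  set e : ℝ := (p:ℝ)⁻¹ with he_def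
  have he0 : 0 < e := by positivity
  have he1 : e < 1 := by rw [he_def, inv_lt_one_iff₀]; right; exact hp1
  set X : ℝ := e ^ a * e with hX_def
  have hXe : X ≤ e := by
    have h1 : e ^ a ≤ 1 := Real.rpow_le_one he0.le he1.le ha.le
    calc X = e ^ a * e := rfl
      _ ≤ 1 * e := by exact mul_le_mul_of_nonneg_right h1 he0.le
      _ = e := one_mul e
  have hX0 : 0 ≤ X := by positivity
  have hX1 : X < 1 := lt_of_le_of_lt hXe he1
  have hX2_0 : 0 ≤ X^2 := sq_nonneg X
  have hX2_1 : X^2 < 1 := by nlinarith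
  -- continuity and integrability
  set f : ℤ_[p] × ℤ_[p] → ℝ := fun q => ‖q.1‖ ^ a * ‖q.2‖ ^ a with hf_def
  have hf_cont : Continuous f :=
    ((Real.continuous_rpow_const ha.le).comp (continuous_norm.comp continuous_fst)).mul
      ((Real.continuous_rpow_const ha.le).comp (continuous_norm.comp continuous_snd))
  have hf_int : Integrable f ((μ p).prod (μ p)) := by
    refine Integrable.mono' (integrable_const (1:ℝ)) hf_cont.aestronglyMeasurable ?_
    filter_upwards with q
    have h1 : ‖q.1‖ ^ a ≤ 1 := Real.rpow_le_one (norm_nonneg _) (PadicInt.norm_le_one _) ha.le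
    have h2 : ‖q.2‖ ^ a ≤ 1 := Real.rpow_le_one (norm_nonneg _) (PadicInt.norm_le_one _) ha.le
    have h3 : 0 ≤ f q := by
      apply mul_nonneg <;> exact Real.rpow_nonneg (norm_nonneg _) _
    rw [Real.norm_of_nonneg h3]
    calc f q = ‖q.1‖ ^ a * ‖q.2‖ ^ a := rfl
      _ ≤ 1 * 1 := mul_le_mul h1 h2 (Real.rpow_nonneg (norm_nonneg _) _) zero_le_one
      _ = 1 := mul_one 1
  -- decompose the integral
  have hstep1 : (∫ t in {q : ℤ_[p] × ℤ_[p] | q.1 ∣ q.2}, f t ∂((μ p).prod (μ p)))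
      = ∑' mk : ℕ × ℕ, ∫ t in T p mk, f t ∂((μ p).prod (μ p)) := by
    rw [setIntegral_congr_set (D_ae_eq p)]
    exact integral_iUnion (T_meas p) (T_disj p) hf_int.integrableOn
  -- evaluate each piece and identify the summand
  have hterm : ∀ mk : ℕ × ℕ, (∫ t in T p mk, f t ∂((μ p).prod (μ p)))
      = (1-e)^2 * ((X^2)^mk.1 * X^mk.2) := by
    intro mk
    rw [hf_def]
    rw [piece_integral p a mk]
    rw [← he_def, pow_rpow_comm he0.le, pow_rpow_comm he0.le]
    rw [hX_def]
    ring
  -- sum the series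
  have hsummable : Summable (fun mk : ℕ × ℕ => (X^2)^mk.1 * X^mk.2) :=
    Summable.mul_of_nonneg (summable_geometric_of_lt_one hX2_0 hX2_1)
      (summable_geometric_of_lt_one hX0 hX1)
      (fun m => pow_nonneg hX2_0 m) (fun k => pow_nonneg hX0 k)
  have hsum : ∑' mk : ℕ × ℕ, (1-e)^2 * ((X^2)^mk.1 * X^mk.2)
      = (1-e)^2 * ((1 - X^2)⁻¹ * (1 - X)⁻¹) := by
    rw [tsum_mul_left]
    congr 1
    rw [Summable.tsum_prod hsummable]
    have hinner : ∀ m : ℕ, ∑' k : ℕ, (X^2)^m * X^k = (X^2)^m * (1-X)⁻¹ := by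
      intro m
      rw [tsum_mul_left, tsum_geometric_of_lt_one hX0 hX1]
    simp only [hinner]
    rw [tsum_mul_right, tsum_geometric_of_lt_one hX2_0 hX2_1]
  -- put together
  rw [show (∫ t in {q : ℤ_[p] × ℤ_[p] | q.1 ∣ q.2},
        ‖t.1‖ ^ (s - 2) * ‖t.2‖ ^ (s - 2) ∂((μ p).prod (μ p)))
      = ∫ t in {q : ℤ_[p] × ℤ_[p] | q.1 ∣ q.2}, f t ∂((μ p).prod (μ p)) from rfl]
  rw [hstep1]
  rw [tsum_congr hterm, hsum]
  -- identify X with p^{-(s-1)}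
  have hea : e ^ a = (p:ℝ) ^ (-a) := by
    rw [he_def, ← Real.rpow_neg_one (p:ℝ), ← Real.rpow_mul (by positivity), neg_one_mul]
  have hXval : X = (p:ℝ) ^ (-(s-1)) := by
    rw [hX_def, hea, he_def, ← Real.rpow_neg_one (p:ℝ), ← Real.rpow_add (by positivity)]
    congr 1
    rw [ha_def]; ring
  have hX2val : X^2 = (p:ℝ) ^ (-(2*s-2)) := by
    rw [hXval, ← Real.rpow_natCast ((p:ℝ) ^ (-(s-1))) 2, ← Real.rpow_mul (by positivity)]
    congr 1
    push_cast; ring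
  rw [hX2val, hXval]
  have hne : (1 - e) ≠ 0 := by linarith
  have hcancel : ((1-e)⁻¹)^2 * (1-e)^2 = 1 := by field_simp
  calc ((1 - (p:ℝ)⁻¹)⁻¹) ^ 2 *
      ((1-e)^2 * ((1 - (p:ℝ) ^ (-(2*s-2)))⁻¹ * (1 - (p:ℝ) ^ (-(s-1)))⁻¹))
      = (((1-e)⁻¹)^2 * (1-e)^2) *
        ((1 - (p:ℝ) ^ (-(2*s-2)))⁻¹ * (1 - (p:ℝ) ^ (-(s-1)))⁻¹) := by
        rw [he_def]; ring
    _ = (1 - (p:ℝ) ^ (-(2*s-2)))⁻¹ * (1 - (p:ℝ) ^ (-(s-1)))⁻¹ := by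
        rw [hcancel, one_mul]
    _ = zetap p (s - 1) * zetap p (2 * s - 2) := by
        simp only [zetap]; ring
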